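/- (Weak convergence for the split equilibrium problem.) Let H₁, H₂ be real Hilbert spaces, C ⊆ H₁ and Q ⊆ H₂ nonempty closed convex sets, A : H₁ → H₂ a bounded linear operator with adjoint A*, g : Q × Q → ℝ satisfying Assumptions A, and f : C × C → ℝ satisfying Assumptions B with constants c₁, c₂ > 0. Let x¹ ∈ C, let 0 < a ≤ b < min{1/(2c₁), 1/(2c₂)} and {λ_k} ⊆ [a, b], let μ > 0 with μ‖A‖² < 1, and let {α_k} ⊆ (0, ∞) with liminf_{k→∞} α_k > 0. Suppose the sequences {x^k}, {y^k}, {z^k}, {u^k} satisfy, for every k: y^k ∈ C minimizes y ↦ λ_k f(x^k, y) + (1/2)‖y − x^k‖² over C; z^k ∈ C minimizes y ↦ λ_k f(y^k, y) + (1/2)‖y − x^k‖² over C; u^k ∈ Q satisfies g(u^k, v) + (1/α_k)⟨v − u^k, u^k − A z^k⟩ ≥ 0 for all v ∈ Q; and x^{k+1} = P_C(z^k + μ A*(u^k − A z^k)). If Ω = {x* ∈ C : f(x*, y) ≥ 0 for all y ∈ C, A x* ∈ Q, and g(A x*, v) ≥ 0 for all v ∈ Q} is nonempty, then there exists p ∈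 Ω such that {x^k} and {z^k} converge weakly to p and {u^k} converges weakly to A p ∈ Sol(Q, g). -/

import Mathlib

open Filter

/-- Weak limits of sequences in a closed convex set stay in the set. -/
lemma weak_mem_closed_convex {H : Type*} [NormedAddCommGroup H] [InnerProductSpace ℝ H]
    [CompleteSpace H] {S : Set H} (hcl : IsClosed S) (hcv : Convex ℝ S)
    {x : ℕ → H} (hx : ∀ k, x k ∈ S) {q : H}
    (hq : ∀ w : H, Tendsto (fun k => (inner ℝ (x k) w : ℝ)) atTop (nhds (inner ℝ q w))) :
    q ∈ S := by
  by_contra hqS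
  obtain ⟨φ, u, hu1, hu2⟩ := geometric_hahn_banach_point_closed hcv hcl hqS
  obtain ⟨w, rfl⟩ := (InnerProductSpace.toDual ℝ H).surjective φ
  have h1 : ∀ k, u ≤ (inner ℝ w (x k) : ℝ) := fun k => (hu2 _ (hx k)).le
  have h2 : Tendsto (fun k => (inner ℝ w (x k) : ℝ)) atTop (nhds (inner ℝ w q)) := by
    simpa [real_inner_comm] using hq w
  have := le_of_tendsto_of_tendsto' tendsto_const_nhds h2 h1
  have : (inner ℝ w q : ℝ) < u := by simpa [InnerProductSpace.toDual_apply_apply] using hu1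
  linarith [le_of_tendsto_of_tendsto' tendsto_const_nhds h2 h1]


lemma exists_weak_subseq {H : Type*} [NormedAddCommGroup H] [InnerProductSpace ℝ H]
    [CompleteSpace H] (x : ℕ → H) (M : ℝ) (hMb : ∀ k, ‖x k‖ ≤ M) :
    ∃ (q : H) (φ : ℕ → ℕ), StrictMono φ ∧
      ∀ w : H, Tendsto (fun k => (inner ℝ (x (φ k)) w : ℝ)) atTop (nhds (inner ℝ q w)) := by
  classical
  set M₀ : ℝ := max M 1 with hM₀def
  have hM₀ : 0 < M₀ := lt_of_lt_of_le one_pos (le_max_right _ _)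
  have hM : ∀ k, ‖x k‖ ≤ M₀ := fun k => (hMb k).trans (le_max_left _ _)
  set K : Submodule ℝ H := (Submodule.span ℝ (Set.range x)).topologicalClosure with hK
  have hKclosed : IsClosed (K : Set H) := Submodule.isClosed_topologicalClosure _
  haveI : CompleteSpace K := hKclosed.completeSpace_coe
  have hxK : ∀ k, x k ∈ K :=
    fun k => (Submodule.le_topologicalClosure _) (Submodule.subset_span ⟨k, rfl⟩)
  -- separability of K
  have hsep : TopologicalSpace.IsSeparable (K : Set H) := by
    have h1 : TopologicalSpace.IsSeparable (Submodule.span ℝ (Set.range x) : Set H) :=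
      TopologicalSpace.IsSeparable.span (Set.countable_range x).isSeparable
    have := h1.closure
    rwa [hK, Submodule.topologicalClosure_coe]
  obtain ⟨c, hc_count, hc_sub⟩ := hsep
  have hc_ne : c.Nonempty := by
    rcases c.eq_empty_or_nonempty with h | h
    · exfalso
      have h0 : (0 : H) ∈ K := K.zero_mem
      have := hc_sub h0
      simp [h, closure_empty] at this
    · exact h
  obtain ⟨d, hd⟩ : ∃ d : ℕ → H, c = Set.range d := hc_count.exists_eq_range hc_ne
  -- Bolzano–Weierstrass in ℕ → ℝ
  set F : ℕ → (ℕ → ℝ) := fun k i => (inner ℝ (x k) (d i) : ℝ) with hF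
  have hFmem : ∀ k, F k ∈ Set.pi Set.univ (fun i => Set.Icc (-(M₀ * ‖d i‖)) (M₀ * ‖d i‖)) := by
    intro k i _
    have := abs_real_inner_le_norm (x k) (d i)
    have hb : |(inner ℝ (x k) (d i) : ℝ)| ≤ M₀ * ‖d i‖ :=
      this.trans (mul_le_mul_of_nonneg_right (hM k) (norm_nonneg _))
    exact abs_le.mp hb
  have hcomp : IsCompact (Set.pi Set.univ (fun i => Set.Icc (-(M₀ * ‖d i‖)) (M₀ * ‖d i‖))) :=
    isCompact_univ_pi fun i => isCompact_Icc
  obtain ⟨L, -, φ, hφ, hLtend⟩ := hcomp.isSeqCompact.subseq_of_frequently_in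
    (Frequently.of_forall hFmem)
  have hLi : ∀ i, Tendsto (fun k => (inner ℝ (x (φ k)) (d i) : ℝ)) atTop (nhds (L i)) := by
    intro i
    have := (continuous_apply i).continuousAt.tendsto.comp hLtend
    exact this
  have hLiE : ∀ i, ∃ r, Tendsto (fun k => (inner ℝ (x (φ k)) (d i) : ℝ)) atTop (nhds r) :=
    fun i => ⟨L i, hLi i⟩
  have hdense : (K : Set H) ⊆ closure (Set.range d) := by
    intro w hw; have := hc_sub hw; rwa [hd] at this
  have hcauchyK : ∀ w ∈ K, CauchySeq (fun k => (inner ℝ (x (φ k)) w : ℝ)) := by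
    intro w hw
    rw [Metric.cauchySeq_iff]
    intro ε hε
    obtain ⟨b, hb, hdist⟩ := Metric.mem_closure_iff.mp (hdense hw) (ε / (4 * M₀))
      (by positivity)
    obtain ⟨i, rfl⟩ := hb
    obtain ⟨r, hr⟩ := hLiE i
    obtain ⟨N, hN⟩ := (Metric.tendsto_atTop.mp hr) (ε / 4) (by positivity)
    refine ⟨N, fun m hm n hn => ?_⟩
    have key : ∀ a b : ℕ, |(inner ℝ (x a - x b) (w - d i) : ℝ)| ≤ 2 * M₀ * ‖w - d i‖ := by
      intro a b
      calc |(inner ℝ (x a - x b) (w - d i) : ℝ)| ≤ ‖x a - x b‖ * ‖w - d i‖ :=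
            abs_real_inner_le_norm _ _
        _ ≤ 2 * M₀ * ‖w - d i‖ := by
            have : ‖x a - x b‖ ≤ 2 * M₀ := by
              have := norm_sub_le (x a) (x b); have := hM a; have := hM b; linarith
            exact mul_le_mul_of_nonneg_right this (norm_nonneg _)
    have hwd : ‖w - d i‖ < ε / (4 * M₀) := by rwa [dist_eq_norm] at hdist
    have h1 : |(inner ℝ (x (φ m)) (d i) : ℝ) - (inner ℝ (x (φ n)) (d i) : ℝ)| < ε / 2 := by
      have hm' := hN m hm; have hn' := hN n hn
      rw [Real.dist_eq] at hm' hn'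
      calc |(inner ℝ (x (φ m)) (d i) : ℝ) - inner ℝ (x (φ n)) (d i)|
          ≤ |(inner ℝ (x (φ m)) (d i) : ℝ) - r| + |r - (inner ℝ (x (φ n)) (d i) : ℝ)| :=
            abs_sub_le _ _ _
        _ = |(inner ℝ (x (φ m)) (d i) : ℝ) - r| + |(inner ℝ (x (φ n)) (d i) : ℝ) - r| := by
            rw [abs_sub_comm r]
        _ < ε / 2 := by linarith
    have hsplit : (inner ℝ (x (φ m)) w : ℝ) - inner ℝ (x (φ n)) w
        = ((inner ℝ (x (φ m)) (d i) : ℝ) - inner ℝ (x (φ n)) (d i))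
          + (inner ℝ (x (φ m) - x (φ n)) (w - d i) : ℝ) := by
      simp only [inner_sub_left, inner_sub_right]; ring
    rw [Real.dist_eq, hsplit]
    have h2 : |(inner ℝ (x (φ m) - x (φ n)) (w - d i) : ℝ)| ≤ 2 * M₀ * ‖w - d i‖ := key _ _
    have h3 : 2 * M₀ * ‖w - d i‖ < 2 * M₀ * (ε / (4 * M₀)) :=
      mul_lt_mul_of_pos_left hwd (by positivity)
    have h4 : 2 * M₀ * (ε / (4 * M₀)) = ε / 2 := by field_simp; ring
    calc |(inner ℝ (x (φ m)) (d i) : ℝ) - inner ℝ (x (φ n)) (d i)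
        + (inner ℝ (x (φ m) - x (φ n)) (w - d i) : ℝ)|
        ≤ |(inner ℝ (x (φ m)) (d i) : ℝ) - inner ℝ (x (φ n)) (d i)|
          + |(inner ℝ (x (φ m) - x (φ n)) (w - d i) : ℝ)| := abs_add_le _ _
      _ < ε := by rw [h4] at h3; linarith
  have hconv : ∀ w : H, ∃ r, Tendsto (fun k => (inner ℝ (x (φ k)) w : ℝ)) atTop (nhds r) := by
    intro w
    obtain ⟨y, hy, z, hz, rfl⟩ := K.exists_add_mem_mem_orthogonal w
    have h0 : ∀ k, (inner ℝ (x (φ k)) (y + z) : ℝ) = inner ℝ (x (φ k)) y := by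
      intro k
      have hz0 : (inner ℝ (x (φ k)) z : ℝ) = 0 :=
        (Submodule.mem_orthogonal K z).mp hz (x (φ k)) (hxK _)
      rw [inner_add_right, hz0, add_zero]
    obtain ⟨r, hr⟩ := cauchySeq_tendsto_of_complete (hcauchyK y hy)
    exact ⟨r, hr.congr fun k => (h0 k).symm⟩
  choose L hL using hconv
  have hadd : ∀ w w', L (w + w') = L w + L w' := by
    intro w w'
    exact tendsto_nhds_unique (hL (w + w'))
      (Tendsto.congr (fun k => (inner_add_right _ _ _).symm) ((hL w).add (hL w')))
  have hsmul : ∀ (r : ℝ) w, L (r • w) = r * L w := by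
    intro r w
    exact tendsto_nhds_unique (hL (r • w))
      (Tendsto.congr (fun k => (real_inner_smul_right _ _ _).symm) ((hL w).const_mul r))
  have hbound : ∀ w, |L w| ≤ M₀ * ‖w‖ := by
    intro w
    have h1 : Tendsto (fun k => |(inner ℝ (x (φ k)) w : ℝ)|) atTop (nhds |L w|) := (hL w).abs
    refine le_of_tendsto h1 (Eventually.of_forall fun k => ?_)
    exact (abs_real_inner_le_norm _ _).trans
      (mul_le_mul_of_nonneg_right (hM _) (norm_nonneg _))
  let ℒ : H →L[ℝ] ℝ := LinearMap.mkContinuous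
    { toFun := L, map_add' := hadd, map_smul' := hsmul } M₀
    (fun w => by simpa using hbound w)
  refine ⟨(InnerProductSpace.toDual ℝ H).symm ℒ, φ, hφ, fun w => ?_⟩
  have : (inner ℝ ((InnerProductSpace.toDual ℝ H).symm ℒ) w : ℝ) = ℒ w :=
    InnerProductSpace.toDual_symm_apply
  rw [this]
  exact hL w

lemma prox_VI {H : Type*} [NormedAddCommGroup H] [InnerProductSpace ℝ H]
    {C : Set H} (hCcv : Convex ℝ C) {φ : H → ℝ} (hφ : ConvexOn ℝ C φ)
    {lam : ℝ} (hlam : 0 < lam) (x : H) {m : H} (hm : m ∈ C)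
    (hmin : ∀ w ∈ C, lam * φ m + (1/2) * ‖m - x‖ ^ 2 ≤ lam * φ w + (1/2) * ‖w - x‖ ^ 2)
    {w : H} (hw : w ∈ C) :
    lam * (φ m - φ w) ≤ (inner ℝ (m - x) (w - m) : ℝ) := by
  refine le_of_forall_pos_le_add fun ε hε => ?_
  set D : ℝ := ‖w - m‖ ^ 2 with hD
  have hD0 : 0 ≤ D := by positivity
  set t : ℝ := min 1 (ε / (D / 2 + 1)) with ht
  have ht0 : 0 < t := lt_min one_pos (by positivity)
  have ht1 : t ≤ 1 := min_le_left _ _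
  have htε : t * (D / 2) ≤ ε := by
    have h1 : t ≤ ε / (D / 2 + 1) := min_le_right _ _
    have h2 : t * (D / 2) ≤ (ε / (D / 2 + 1)) * (D / 2) :=
      mul_le_mul_of_nonneg_right h1 (by positivity)
    have h3 : (ε / (D / 2 + 1)) * (D / 2) ≤ ε := by
      rw [div_mul_eq_mul_div, div_le_iff₀ (by positivity)]
      nlinarith
    linarith
  have hwt : (1 - t) • m + t • w ∈ C := hCcv hm hw (by linarith) ht0.le (by ring)
  have hmin' := hmin _ hwt
  have hconv : φ ((1 - t) • m + t • w) ≤ (1 - t) * φ m + t * φ w := by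
    have := hφ.2 hm hw (by linarith : (0:ℝ) ≤ 1 - t) ht0.le (by ring)
    simpa [smul_eq_mul] using this
  have hvec : (1 - t) • m + t • w - x = (m - x) + t • (w - m) := by
    rw [sub_smul, one_smul, smul_sub]; abel
  have hnorm : ‖(1 - t) • m + t • w - x‖ ^ 2
      = ‖m - x‖ ^ 2 + 2 * (t * (inner ℝ (m - x) (w - m) : ℝ)) + t ^ 2 * D := by
    rw [hvec, norm_add_sq_real, real_inner_smul_right, norm_smul]
    rw [Real.norm_eq_abs, abs_of_pos ht0, mul_pow, hD]
  rw [hnorm] at hmin'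
  have key : lam * (φ m - φ w) * t ≤ t * (inner ℝ (m - x) (w - m) : ℝ) + t ^ 2 * (D / 2) := by
    nlinarith [hmin', hconv, hlam]
  have h5 : lam * (φ m - φ w) * t ≤ ((inner ℝ (m - x) (w - m) : ℝ) + ε) * t := by
    nlinarith [key, htε, ht0.le]
  exact le_of_mul_le_mul_right h5 ht0

lemma inner_identity {H : Type*} [NormedAddCommGroup H] [InnerProductSpace ℝ H]
    (a b c : H) : 2 * (inner ℝ (a - b) (c - a) : ℝ) = ‖b - c‖ ^ 2 - ‖b - a‖ ^ 2 - ‖a - c‖ ^ 2 := by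
  have h : b - c = (b - a) + (a - c) := by abel
  rw [h, norm_add_sq_real]
  have h2 : (inner ℝ (a - b) (c - a) : ℝ) = inner ℝ (b - a) (a - c) := by
    rw [show a - b = -(b - a) by abel, show c - a = -(a - c) by abel, inner_neg_neg]
  rw [h2]; ring

set_option maxHeartbeats 2000000 in
/-- Weak convergence theorem for the extragradient algorithm for the split equilibrium
problem (SEP), the special case `S = I`, `T = I` of the SEPNM algorithm. -/
theorem weak_convergence_SEP
    {H₁ : Type*} [NormedAddCommGroup H₁] [InnerProductSpace ℝ H₁] [CompleteSpace H₁]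
    {H₂ : Type*} [NormedAddCommGroup H₂] [InnerProductSpace ℝ H₂] [CompleteSpace H₂]
    (C : Set H₁) (hCne : C.Nonempty) (hCcl : IsClosed C) (hCcv : Convex ℝ C)
    (Q : Set H₂) (hQne : Q.Nonempty) (hQcl : IsClosed Q) (hQcv : Convex ℝ Q)
    (A : H₁ →L[ℝ] H₂)
    (g : H₂ → H₂ → ℝ)
    (hgA1 : ∀ u ∈ Q, g u u = 0)
    (hgA2 : ∀ u ∈ Q, ∀ v ∈ Q, g u v + g v u ≤ 0)
    (hgA3 : ∀ u ∈ Q, ∀ v ∈ Q, ∀ w ∈ Q,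
      limsup (fun lam : ℝ => g (lam • w + (1 - lam) • u) v) (nhdsWithin 0 (Set.Ioi 0)) ≤ g u v)
    (hgA4 : ∀ u ∈ Q, ConvexOn ℝ Q (g u) ∧ LowerSemicontinuousOn (g u) Q)
    (f : H₁ → H₁ → ℝ) (c₁ c₂ : ℝ) (hc₁ : 0 < c₁) (hc₂ : 0 < c₂)
    (hfB1 : ∀ x ∈ C, f x x = 0)
    (hfB2 : ∀ x ∈ C, ∀ y ∈ C, 0 ≤ f x y → f y x ≤ 0)
    (hfB3 : ∀ (xs ys : ℕ → H₁) (x y : H₁), (∀ k, xs k ∈ C) → (∀ k, ys k ∈ C) →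
      x ∈ C → y ∈ C →
      (∀ w : H₁, Tendsto (fun k => (inner ℝ (xs k) w : ℝ)) atTop (nhds (inner ℝ x w))) →
      (∀ w : H₁, Tendsto (fun k => (inner ℝ (ys k) w : ℝ)) atTop (nhds (inner ℝ y w))) →
      Tendsto (fun k => f (xs k) (ys k)) atTop (nhds (f x y)))
    (hfB4 : ∀ x ∈ C, ConvexOn ℝ C (f x))
    (hfB5 : ∀ x ∈ C, ∀ y ∈ C, ∀ z ∈ C,
      f x y + f y z ≥ f x z - c₁ * ‖x - y‖ ^ 2 - c₂ * ‖y - z‖ ^ 2)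
    (a b : ℝ) (ha : 0 < a) (hab : a ≤ b) (hb : b < min (1 / (2 * c₁)) (1 / (2 * c₂)))
    (lam : ℕ → ℝ) (hlam : ∀ k, lam k ∈ Set.Icc a b)
    (μ : ℝ) (hμ0 : 0 < μ) (hμ : μ * ‖A‖ ^ 2 < 1)
    (αk : ℕ → ℝ) (hαk : ∀ k, 0 < αk k)
    (hαkinf : ∃ c > 0, ∀ᶠ k in atTop, c ≤ αk k)
    (x y z : ℕ → H₁) (u : ℕ → H₂)
    (hx0 : x 0 ∈ C)
    (hy : ∀ k, y k ∈ C ∧ ∀ w ∈ C,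
      lam k * f (x k) (y k) + (1 / 2) * ‖y k - x k‖ ^ 2 ≤
        lam k * f (x k) w + (1 / 2) * ‖w - x k‖ ^ 2)
    (hz : ∀ k, z k ∈ C ∧ ∀ w ∈ C,
      lam k * f (y k) (z k) + (1 / 2) * ‖z k - x k‖ ^ 2 ≤
        lam k * f (y k) w + (1 / 2) * ‖w - x k‖ ^ 2)
    (hu : ∀ k, u k ∈ Q ∧ ∀ v ∈ Q,
      g (u k) v + (1 / αk k) * (inner ℝ (v - u k) (u k - A (z k)) : ℝ) ≥ 0)
    (hxk : ∀ k, x (k + 1) ∈ C ∧ ∀ w ∈ C,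
      (inner ℝ ((z k + μ • (ContinuousLinearMap.adjoint A) (u k - A (z k))) - x (k + 1))
        (w - x (k + 1)) : ℝ) ≤ 0)
    (Ω : Set H₁)
    (hΩ : Ω = {xs : H₁ | xs ∈ C ∧ (∀ w ∈ C, f xs w ≥ 0) ∧
      A xs ∈ Q ∧ (∀ v ∈ Q, g (A xs) v ≥ 0)})
    (hΩne : Ω.Nonempty) :
    ∃ p ∈ Ω,
      (∀ w : H₁, Tendsto (fun k => (inner ℝ (x k) w : ℝ)) atTop (nhds (inner ℝ p w))) ∧
      (∀ w : H₁, Tendsto (fun k => (inner ℝ (z k) w : ℝ)) atTop (nhds (inner ℝ p w))) ∧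
      (∀ w : H₂, Tendsto (fun k => (inner ℝ (u k) w : ℝ)) atTop (nhds (inner ℝ (A p) w))) ∧
      A p ∈ Q ∧ (∀ v ∈ Q, g (A p) v ≥ 0) := by

  classical
  -- basic memberships
  have hxC : ∀ k, x k ∈ C := by
    intro k; cases k with
    | zero => exact hx0
    | succ n => exact (hxk n).1
  have hyC : ∀ k, y k ∈ C := fun k => (hy k).1
  have hzC : ∀ k, z k ∈ C := fun k => (hz k).1
  have huQ : ∀ k, u k ∈ Q := fun k => (hu k).1
  have hlam0 : ∀ k, 0 < lam k := fun k => lt_of_lt_of_le ha (hlam k).1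
  set e : ℕ → H₂ := fun k => u k - A (z k) with he_def
  set δ : ℝ := min (1 - 2 * b * c₁) (1 - 2 * b * c₂) with hδ_def
  have hδ : 0 < δ := by
    have h1 : b < 1 / (2 * c₁) := lt_of_lt_of_le hb (min_le_left _ _)
    have h2 : b < 1 / (2 * c₂) := lt_of_lt_of_le hb (min_le_right _ _)
    have h1' : 2 * b * c₁ < 1 := by
      rw [lt_div_iff₀ (by positivity)] at h1; nlinarith
    have h2' : 2 * b * c₂ < 1 := by
      rw [lt_div_iff₀ (by positivity)] at h2; nlinarith
    exact lt_min (by linarith) (by linarith)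
  -- membership of Ω elements
  have hΩmem : ∀ p ∈ Ω, p ∈ C ∧ (∀ w ∈ C, f p w ≥ 0) ∧ A p ∈ Q ∧ (∀ v ∈ Q, g (A p) v ≥ 0) := by
    intro p hp; rw [hΩ] at hp; exact hp
  -- the two prox variational inequalities
  have hVIy : ∀ k, ∀ w ∈ C,
      lam k * (f (x k) (y k) - f (x k) w) ≤ (inner ℝ (y k - x k) (w - y k) : ℝ) := by
    intro k w hw
    exact prox_VI hCcv (hfB4 _ (hxC k)) (hlam0 k) (x k) (hyC k) (fun w' hw' => (hy k).2 w' hw') hw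
  have hVIz : ∀ k, ∀ w ∈ C,
      lam k * (f (y k) (z k) - f (y k) w) ≤ (inner ℝ (z k - x k) (w - z k) : ℝ) := by
    intro k w hw
    exact prox_VI hCcv (hfB4 _ (hyC k)) (hlam0 k) (x k) (hzC k) (fun w' hw' => (hz k).2 w' hw') hw
  -- one-step inequality, part 1
  have hstep1 : ∀ p ∈ Ω, ∀ k, ‖z k - p‖ ^ 2 ≤ ‖x k - p‖ ^ 2
      - (1 - 2 * lam k * c₁) * ‖x k - y k‖ ^ 2 - (1 - 2 * lam k * c₂) * ‖y k - z k‖ ^ 2 := by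
    intro p hp k
    obtain ⟨hpC, hpf, hpQ, hpg⟩ := hΩmem p hp
    have hi := hVIz k p hpC
    have hii := hVIy k (z k) (hzC k)
    have hfp : f (y k) p ≤ 0 := hfB2 p hpC (y k) (hyC k) (hpf _ (hyC k))
    have hB5 := hfB5 (x k) (hxC k) (y k) (hyC k) (z k) (hzC k)
    have id1 := inner_identity (z k) (x k) p
    have id2 := inner_identity (y k) (x k) (z k)
    have h3 : 0 ≤ lam k * (-(f (y k) p)) :=
      mul_nonneg (hlam0 k).le (neg_nonneg.mpr hfp)
    have h4 : 0 ≤ lam k * (f (x k) (y k) + f (y k) (z k) - f (x k) (z k)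
        + c₁ * ‖x k - y k‖ ^ 2 + c₂ * ‖y k - z k‖ ^ 2) :=
      mul_nonneg (hlam0 k).le (by linarith)
    nlinarith [hi, hii, h3, h4, id1, id2]
  -- one-step inequality, part 2
  have hstep2 : ∀ p ∈ Ω, ∀ k, ‖x (k + 1) - p‖ ^ 2 ≤ ‖z k - p‖ ^ 2 - μ * ‖e k‖ ^ 2 := by
    intro p hp k
    obtain ⟨hpC, hpf, hpQ, hpg⟩ := hΩmem p hp
    set t : H₁ := z k + μ • (ContinuousLinearMap.adjoint A) (e k) with ht_def
    have hchar : (inner ℝ (t - x (k + 1)) (p - x (k + 1)) : ℝ) ≤ 0 := (hxk k).2 p hpC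
    have h1 : ‖x (k + 1) - p‖ ^ 2 ≤ ‖t - p‖ ^ 2 := by
      have hdc : t - p = (t - x (k + 1)) + (x (k + 1) - p) := by abel
      have hexp : ‖t - p‖ ^ 2 = ‖t - x (k + 1)‖ ^ 2
          + 2 * (inner ℝ (t - x (k + 1)) (x (k + 1) - p) : ℝ) + ‖x (k + 1) - p‖ ^ 2 := by
        rw [hdc, norm_add_sq_real]
      have hneg : (inner ℝ (t - x (k + 1)) (x (k + 1) - p) : ℝ)
          = -(inner ℝ (t - x (k + 1)) (p - x (k + 1)) : ℝ) := by
        rw [show x (k + 1) - p = -(p - x (k + 1)) by abel, inner_neg_right]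
      nlinarith [sq_nonneg ‖t - x (k + 1)‖]
    have h2 : ‖t - p‖ ^ 2 = ‖z k - p‖ ^ 2
        + 2 * (μ * (inner ℝ (z k - p) ((ContinuousLinearMap.adjoint A) (e k)) : ℝ))
        + μ ^ 2 * ‖(ContinuousLinearMap.adjoint A) (e k)‖ ^ 2 := by
      have hdc : t - p = (z k - p) + μ • (ContinuousLinearMap.adjoint A) (e k) := by
        rw [ht_def]; abel
      rw [hdc, norm_add_sq_real, real_inner_smul_right, norm_smul, Real.norm_eq_abs,
        abs_of_pos hμ0, mul_pow]
    have h3 : (inner ℝ (z k - p) ((ContinuousLinearMap.adjoint A) (e k)) : ℝ)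
        = (inner ℝ (A (z k) - A p) (e k) : ℝ) := by
      rw [ContinuousLinearMap.adjoint_inner_right, map_sub]
    have h4 : (inner ℝ (A (z k) - A p) (e k) : ℝ) ≤ -‖e k‖ ^ 2 := by
      have hsplit : A (z k) - A p = -(e k) + (u k - A p) := by
        simp only [he_def]; abel
      have hip : (inner ℝ (u k - A p) (e k) : ℝ) ≤ 0 := by
        have hgu : g (u k) (A p) ≤ 0 := by
          have := hgA2 (u k) (huQ k) (A p) hpQ
          have := hpg (u k) (huQ k)
          linarith
        have hineq := (hu k).2 (A p) hpQ
        have hα := hαk k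
        have h5 : 0 ≤ (inner ℝ (A p - u k) (u k - A (z k)) : ℝ) := by
          by_contra hcon
          push_neg at hcon
          have : (1 / αk k) * (inner ℝ (A p - u k) (u k - A (z k)) : ℝ) < 0 :=
            mul_neg_of_pos_of_neg (by positivity) hcon
          linarith
        have : (inner ℝ (u k - A p) (e k) : ℝ) = -(inner ℝ (A p - u k) (u k - A (z k)) : ℝ) := by
          rw [show u k - A p = -(A p - u k) by abel, inner_neg_left, he_def]
        linarith
      have hee : (inner ℝ (-(e k)) (e k) : ℝ) = -‖e k‖ ^ 2 := by
        rw [inner_neg_left, real_inner_self_eq_norm_sq]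
      rw [hsplit, inner_add_left, hee]
      linarith
    have h5 : ‖(ContinuousLinearMap.adjoint A) (e k)‖ ^ 2 ≤ ‖A‖ ^ 2 * ‖e k‖ ^ 2 := by
      have hle : ‖(ContinuousLinearMap.adjoint A) (e k)‖ ≤ ‖A‖ * ‖e k‖ := by
        have := (ContinuousLinearMap.adjoint A).le_opNorm (e k)
        rwa [ContinuousLinearMap.adjoint.norm_map A] at this
      nlinarith [norm_nonneg ((ContinuousLinearMap.adjoint A) (e k)), norm_nonneg (e k),
        norm_nonneg A]
    have hμA : μ ^ 2 * ‖A‖ ^ 2 * ‖e k‖ ^ 2 ≤ μ * ‖e k‖ ^ 2 := by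
      have hh := mul_le_mul_of_nonneg_right
        (le_of_lt (mul_lt_mul_of_pos_left hμ hμ0)) (sq_nonneg ‖e k‖)
      nlinarith [hh]
    rw [h3] at h2
    have h6 := mul_le_mul_of_nonneg_left h4 hμ0.le
    have h7 := mul_le_mul_of_nonneg_left h5 (sq_nonneg μ)
    nlinarith [h1, h2, h6, h7, hμA]
  -- combined Fejér-type inequality
  have hfejer : ∀ p ∈ Ω, ∀ k, ‖x (k + 1) - p‖ ^ 2 + δ * ‖x k - y k‖ ^ 2
      + δ * ‖y k - z k‖ ^ 2 + μ * ‖e k‖ ^ 2 ≤ ‖x k - p‖ ^ 2 := by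
    intro p hp k
    have h1 := hstep1 p hp k
    have h2 := hstep2 p hp k
    have hl1 : δ ≤ 1 - 2 * lam k * c₁ := by
      have := (hlam k).2
      have : 2 * lam k * c₁ ≤ 2 * b * c₁ := by nlinarith [(hlam k).2, hc₁.le]
      have := min_le_left (1 - 2 * b * c₁) (1 - 2 * b * c₂)
      simp only [hδ_def]; linarith [min_le_left (1 - 2 * b * c₁) (1 - 2 * b * c₂)]
    have hl2 : δ ≤ 1 - 2 * lam k * c₂ := by
      have : 2 * lam k * c₂ ≤ 2 * b * c₂ := by nlinarith [(hlam k).2, hc₂.le]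
      simp only [hδ_def]; linarith [min_le_right (1 - 2 * b * c₁) (1 - 2 * b * c₂)]
    nlinarith [sq_nonneg ‖x k - y k‖, sq_nonneg ‖y k - z k‖]
  obtain ⟨p₀, hp₀⟩ := hΩne
  -- monotone decreasing distances
  have hanti : ∀ p ∈ Ω, Antitone (fun k => ‖x k - p‖ ^ 2) := by
    intro p hp
    refine antitone_nat_of_succ_le fun k => ?_
    have := hfejer p hp k
    nlinarith [sq_nonneg ‖x k - y k‖, sq_nonneg ‖y k - z k‖, sq_nonneg ‖e k‖,
      mul_nonneg hδ.le (sq_nonneg ‖x k - y k‖), mul_nonneg hδ.le (sq_nonneg ‖y k - z k‖),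
      mul_nonneg hμ0.le (sq_nonneg ‖e k‖)]
  have hdistlim : ∀ p ∈ Ω, ∃ L : ℝ, Tendsto (fun k => ‖x k - p‖ ^ 2) atTop (nhds L) := by
    intro p hp
    refine ⟨_, tendsto_atTop_ciInf (hanti p hp) ⟨0, ?_⟩⟩
    rintro r ⟨k, rfl⟩; positivity
  -- deficit terms tend to zero
  have hdef0 : Tendsto (fun k => ‖x k - p₀‖ ^ 2 - ‖x (k + 1) - p₀‖ ^ 2) atTop (nhds 0) := by
    obtain ⟨L, hL⟩ := hdistlim p₀ hp₀
    have := hL.sub (hL.comp (tendsto_add_atTop_nat 1))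
    simpa using this
  have hkey : ∀ c : ℝ, 0 < c → ∀ s : ℕ → ℝ, (∀ k, 0 ≤ s k) →
      (∀ k, c * s k ^ 2 ≤ ‖x k - p₀‖ ^ 2 - ‖x (k + 1) - p₀‖ ^ 2) →
      Tendsto s atTop (nhds 0) := by
    intro c hc s hs hbound
    have h1 : Tendsto (fun k => (‖x k - p₀‖ ^ 2 - ‖x (k + 1) - p₀‖ ^ 2) / c) atTop (nhds 0) := by
      simpa using hdef0.div_const c
    have h2 : Tendsto (fun k => s k ^ 2) atTop (nhds 0) := by
      refine squeeze_zero (fun k => sq_nonneg _) (fun k => ?_) h1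
      rw [le_div_iff₀ hc, mul_comm]
      exact hbound k
    have h3 := (Real.continuous_sqrt.tendsto 0).comp h2
    rw [Real.sqrt_zero] at h3
    exact h3.congr fun k => by simp [Real.sqrt_sq (hs k)]
  have hxy0 : Tendsto (fun k => ‖x k - y k‖) atTop (nhds 0) := by
    refine hkey δ hδ _ (fun k => norm_nonneg _) fun k => ?_
    nlinarith [hfejer p₀ hp₀ k, mul_nonneg hδ.le (sq_nonneg ‖y k - z k‖),
      mul_nonneg hμ0.le (sq_nonneg ‖e k‖)]
  have hyz0 : Tendsto (fun k => ‖y k - z k‖) atTop (nhds 0) := by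
    refine hkey δ hδ _ (fun k => norm_nonneg _) fun k => ?_
    nlinarith [hfejer p₀ hp₀ k, mul_nonneg hδ.le (sq_nonneg ‖x k - y k‖),
      mul_nonneg hμ0.le (sq_nonneg ‖e k‖)]
  have he0 : Tendsto (fun k => ‖e k‖) atTop (nhds 0) := by
    refine hkey μ hμ0 _ (fun k => norm_nonneg _) fun k => ?_
    nlinarith [hfejer p₀ hp₀ k, mul_nonneg hδ.le (sq_nonneg ‖x k - y k‖),
      mul_nonneg hδ.le (sq_nonneg ‖y k - z k‖)]
  have hxz0 : Tendsto (fun k => ‖x k - z k‖) atTop (nhds 0) := by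
    have h := hxy0.add hyz0
    rw [add_zero] at h
    refine squeeze_zero (fun k => norm_nonneg _) (fun k => ?_) h
    have : x k - z k = (x k - y k) + (y k - z k) := by abel
    rw [this]; exact norm_add_le _ _
  -- boundedness
  have hxbdd : ∃ M : ℝ, ∀ k, ‖x k‖ ≤ M := by
    refine ⟨‖x 0 - p₀‖ + ‖p₀‖, fun k => ?_⟩
    have h1 : ‖x k - p₀‖ ^ 2 ≤ ‖x 0 - p₀‖ ^ 2 := hanti p₀ hp₀ (Nat.zero_le k)
    have h2 : ‖x k - p₀‖ ≤ ‖x 0 - p₀‖ := by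
      nlinarith [norm_nonneg (x k - p₀), norm_nonneg (x 0 - p₀)]
    calc ‖x k‖ = ‖(x k - p₀) + p₀‖ := by rw [sub_add_cancel]
      _ ≤ ‖x k - p₀‖ + ‖p₀‖ := norm_add_le _ _
      _ ≤ ‖x 0 - p₀‖ + ‖p₀‖ := by linarith
  obtain ⟨M, hM⟩ := hxbdd

  -- bounds from convergent sequences
  have hbdd_aux : ∀ s : ℕ → ℝ, Tendsto s atTop (nhds 0) → ∃ m : ℝ, ∀ k, s k ≤ m := by
    intro s hs
    obtain ⟨m, hm⟩ := hs.bddAbove_range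
    exact ⟨m, fun k => hm ⟨k, rfl⟩⟩
  obtain ⟨Mxy, hMxy⟩ := hbdd_aux _ hxy0
  obtain ⟨Mxz, hMxz⟩ := hbdd_aux _ hxz0
  obtain ⟨Me, hMe⟩ := hbdd_aux _ he0
  have hybdd : ∀ k, ‖y k‖ ≤ M + Mxy := by
    intro k
    calc ‖y k‖ = ‖x k - (x k - y k)‖ := by congr 1; abel
      _ ≤ ‖x k‖ + ‖x k - y k‖ := norm_sub_le _ _
      _ ≤ M + Mxy := add_le_add (hM k) (hMxy k)
  have hzbdd : ∀ k, ‖z k‖ ≤ M + Mxz := by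
    intro k
    calc ‖z k‖ = ‖x k - (x k - z k)‖ := by congr 1; abel
      _ ≤ ‖x k‖ + ‖x k - z k‖ := norm_sub_le _ _
      _ ≤ M + Mxz := add_le_add (hM k) (hMxz k)
  have hubdd : ∀ k, ‖u k‖ ≤ Me + ‖A‖ * (M + Mxz) := by
    intro k
    have h1 : u k = e k + A (z k) := by simp [he_def]
    calc ‖u k‖ = ‖e k + A (z k)‖ := by rw [← h1]
      _ ≤ ‖e k‖ + ‖A (z k)‖ := norm_add_le _ _
      _ ≤ Me + ‖A‖ * (M + Mxz) := by
          refine add_le_add (hMe k) ((A.le_opNorm _).trans ?_)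
          exact mul_le_mul_of_nonneg_left (hzbdd k) (norm_nonneg A)
  -- every weak cluster point of x lies in Ω
  have hclusterΩ : ∀ ψ : ℕ → ℕ, Tendsto ψ atTop atTop → ∀ q : H₁,
      (∀ w : H₁, Tendsto (fun j => (inner ℝ (x (ψ j)) w : ℝ)) atTop (nhds (inner ℝ q w))) →
      q ∈ Ω := by
    intro ψ hψ q hq
    have hyq : ∀ w : H₁, Tendsto (fun j => (inner ℝ (y (ψ j)) w : ℝ)) atTop (nhds (inner ℝ q w)) := by
      intro w
      have h0 : Tendsto (fun j => (inner ℝ (y (ψ j) - x (ψ j)) w : ℝ)) atTop (nhds 0) := by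
        refine squeeze_zero_norm (a := fun j => ‖x (ψ j) - y (ψ j)‖ * ‖w‖) (fun j => ?_) ?_
        · refine (abs_real_inner_le_norm _ _).trans (le_of_eq ?_)
          rw [norm_sub_rev]
        · have := (hxy0.comp hψ).mul_const ‖w‖
          simpa using this
      have := (hq w).add h0
      rw [add_zero] at this
      refine this.congr fun j => ?_
      rw [inner_sub_left]; ring
    have hzq : ∀ w : H₁, Tendsto (fun j => (inner ℝ (z (ψ j)) w : ℝ)) atTop (nhds (inner ℝ q w)) := by
      intro w
      have h0 : Tendsto (fun j => (inner ℝ (z (ψ j) - x (ψ j)) w : ℝ)) atTop (nhds 0) := by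
        refine squeeze_zero_norm (a := fun j => ‖x (ψ j) - z (ψ j)‖ * ‖w‖) (fun j => ?_) ?_
        · refine (abs_real_inner_le_norm _ _).trans (le_of_eq ?_)
          rw [norm_sub_rev]
        · have := (hxz0.comp hψ).mul_const ‖w‖
          simpa using this
      have := (hq w).add h0
      rw [add_zero] at this
      refine this.congr fun j => ?_
      rw [inner_sub_left]; ring
    have hqC : q ∈ C := weak_mem_closed_convex hCcl hCcv (fun j => hxC (ψ j)) hq
    have hqEP : ∀ w ∈ C, f q w ≥ 0 := by
      intro w hw
      have h1 : ∀ j, f (x (ψ j)) (y (ψ j))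
          - (1 / a) * (‖x (ψ j) - y (ψ j)‖ * (‖w‖ + (M + Mxy))) ≤ f (x (ψ j)) w := by
        intro j
        have hvi := hVIy (ψ j) w hw
        have hcs : (inner ℝ (y (ψ j) - x (ψ j)) (w - y (ψ j)) : ℝ)
            ≤ ‖x (ψ j) - y (ψ j)‖ * (‖w‖ + (M + Mxy)) := by
          calc (inner ℝ (y (ψ j) - x (ψ j)) (w - y (ψ j)) : ℝ)
              ≤ ‖y (ψ j) - x (ψ j)‖ * ‖w - y (ψ j)‖ := real_inner_le_norm _ _
            _ ≤ ‖x (ψ j) - y (ψ j)‖ * (‖w‖ + (M + Mxy)) := by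
                rw [norm_sub_rev (y (ψ j))]
                refine mul_le_mul_of_nonneg_left ?_ (norm_nonneg _)
                exact (norm_sub_le _ _).trans (add_le_add_right (hybdd (ψ j)) _)
        have hla : a ≤ lam (ψ j) := (hlam (ψ j)).1
        have hR0 : (0:ℝ) ≤ ‖x (ψ j) - y (ψ j)‖ * (‖w‖ + (M + Mxy)) := by
          have : (0:ℝ) ≤ ‖w‖ + (M + Mxy) :=
            le_trans (norm_nonneg (y (ψ j))) (by linarith [hybdd (ψ j), norm_nonneg w])
          positivity
        have h2 : f (x (ψ j)) (y (ψ j)) - f (x (ψ j)) w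
            ≤ (‖x (ψ j) - y (ψ j)‖ * (‖w‖ + (M + Mxy))) / a := by
          rw [le_div_iff₀ ha]
          rcases le_or_gt (f (x (ψ j)) (y (ψ j)) - f (x (ψ j)) w) 0 with hle | hpos
          · nlinarith [hR0, ha]
          · have h3 := mul_le_mul_of_nonneg_right hla hpos.le
            nlinarith [hvi, hcs]
        have h4 : (1 / a) * (‖x (ψ j) - y (ψ j)‖ * (‖w‖ + (M + Mxy)))
            = (‖x (ψ j) - y (ψ j)‖ * (‖w‖ + (M + Mxy))) / a := by ring
        linarith [h2, h4.le, h4.ge]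
      have h2 : Tendsto (fun j => f (x (ψ j)) w) atTop (nhds (f q w)) :=
        hfB3 (fun j => x (ψ j)) (fun _ => w) q w (fun j => hxC _) (fun _ => hw) hqC hw hq
          (fun w' => tendsto_const_nhds)
      have h3 : Tendsto (fun j => f (x (ψ j)) (y (ψ j))) atTop (nhds 0) := by
        have := hfB3 (fun j => x (ψ j)) (fun j => y (ψ j)) q q (fun j => hxC _)
          (fun j => hyC _) hqC hqC hq hyq
        rwa [hfB1 q hqC] at this
      have h4 : Tendsto (fun j => (1 / a) * (‖x (ψ j) - y (ψ j)‖ * (‖w‖ + (M + Mxy))))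
          atTop (nhds 0) := by
        have := ((hxy0.comp hψ).mul_const (‖w‖ + (M + Mxy))).const_mul (1 / a)
        simpa using this
      have h5 := h3.sub h4
      rw [sub_zero] at h5
      exact le_of_tendsto_of_tendsto' h5 h2 h1
    -- weak convergence of u along ψ to A q
    have huq : ∀ v : H₂, Tendsto (fun j => (inner ℝ (u (ψ j)) v : ℝ)) atTop
        (nhds (inner ℝ (A q) v)) := by
      intro v
      have h0 : Tendsto (fun j => (inner ℝ (e (ψ j)) v : ℝ)) atTop (nhds 0) := by
        refine squeeze_zero_norm (a := fun j => ‖e (ψ j)‖ * ‖v‖) (fun j => ?_) ?_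
        · exact abs_real_inner_le_norm _ _
        · have := (he0.comp hψ).mul_const ‖v‖
          simpa using this
      have h1 : Tendsto (fun j => (inner ℝ (A (z (ψ j))) v : ℝ)) atTop
          (nhds (inner ℝ (A q) v)) := by
        have h2 := hzq ((ContinuousLinearMap.adjoint A) v)
        have h3 : ∀ j, (inner ℝ (z (ψ j)) ((ContinuousLinearMap.adjoint A) v) : ℝ)
            = (inner ℝ (A (z (ψ j))) v : ℝ) := fun j =>
          ContinuousLinearMap.adjoint_inner_right A (z (ψ j)) v
        have h4 : (inner ℝ q ((ContinuousLinearMap.adjoint A) v) : ℝ) = inner ℝ (A q) v :=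
          ContinuousLinearMap.adjoint_inner_right A q v
        rw [h4] at h2
        exact h2.congr h3
      have := h0.add h1
      rw [zero_add] at this
      refine this.congr fun j => ?_
      have : u (ψ j) = e (ψ j) + A (z (ψ j)) := by simp [he_def]
      rw [this, inner_add_left]
    have hAqQ : A q ∈ Q := weak_mem_closed_convex hQcl hQcv (fun j => huQ (ψ j)) huq
    -- g v (A q) ≤ 0 for all v ∈ Q
    obtain ⟨cα, hcα0, hcαev⟩ := hαkinf
    have hgv0 : ∀ v ∈ Q, g v (A q) ≤ 0 := by
      intro v hv
      have hbnd : ∀ᶠ j in atTop, g v (u (ψ j))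
          ≤ (1 / cα) * ((‖v‖ + (Me + ‖A‖ * (M + Mxz))) * ‖e (ψ j)‖) := by
        filter_upwards [hψ.eventually hcαev] with j hcj
        have h1 := (hu (ψ j)).2 v hv
        have h2 : g v (u (ψ j)) ≤ -g (u (ψ j)) v := by
          have := hgA2 (u (ψ j)) (huQ (ψ j)) v hv; linarith
        have h3 : -g (u (ψ j)) v ≤ (1 / αk (ψ j)) * (inner ℝ (v - u (ψ j)) (e (ψ j)) : ℝ) := by
          simp only [he_def]; linarith [h1]
        have h4 : (inner ℝ (v - u (ψ j)) (e (ψ j)) : ℝ)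
            ≤ (‖v‖ + (Me + ‖A‖ * (M + Mxz))) * ‖e (ψ j)‖ := by
          refine (real_inner_le_norm _ _).trans ?_
          refine mul_le_mul_of_nonneg_right ?_ (norm_nonneg _)
          exact (norm_sub_le _ _).trans (add_le_add_right (hubdd (ψ j)) _)
        have h5 : (1 / αk (ψ j)) * (inner ℝ (v - u (ψ j)) (e (ψ j)) : ℝ)
            ≤ (1 / cα) * ((‖v‖ + (Me + ‖A‖ * (M + Mxz))) * ‖e (ψ j)‖) := by
          rcases le_or_gt (inner ℝ (v - u (ψ j)) (e (ψ j)) : ℝ) 0 with hip | hip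
          · have hα := hαk (ψ j)
            have : (1 / αk (ψ j)) * (inner ℝ (v - u (ψ j)) (e (ψ j)) : ℝ) ≤ 0 :=
              mul_nonpos_of_nonneg_of_nonpos (by positivity) hip
            have h6 : 0 ≤ (1 / cα) * ((‖v‖ + (Me + ‖A‖ * (M + Mxz))) * ‖e (ψ j)‖) := by
              have h7 : (0:ℝ) ≤ ‖v‖ + (Me + ‖A‖ * (M + Mxz)) :=
                le_trans (norm_nonneg (u (ψ j)))
                  (by linarith [hubdd (ψ j), norm_nonneg v])
              positivity
            linarith
          · have hle : (1 / αk (ψ j)) ≤ 1 / cα :=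
              one_div_le_one_div_of_le hcα0 hcj
            have := mul_le_mul_of_nonneg_right hle hip.le
            have h8 := mul_le_mul_of_nonneg_left h4 (by positivity : (0:ℝ) ≤ 1 / cα)
            calc (1 / αk (ψ j)) * (inner ℝ (v - u (ψ j)) (e (ψ j)) : ℝ)
                ≤ (1 / cα) * (inner ℝ (v - u (ψ j)) (e (ψ j)) : ℝ) := this
              _ ≤ (1 / cα) * ((‖v‖ + (Me + ‖A‖ * (M + Mxz))) * ‖e (ψ j)‖) := h8
        linarith
      have hgoal : ∀ ε : ℝ, 0 < ε → g v (A q) ≤ ε := by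
        intro ε hε
        -- eventually g v (u (ψ j)) ≤ ε
        have htend : Tendsto (fun j => (1 / cα) * ((‖v‖ + (Me + ‖A‖ * (M + Mxz)))
            * ‖e (ψ j)‖)) atTop (nhds 0) := by
          have := ((he0.comp hψ).const_mul (‖v‖ + (Me + ‖A‖ * (M + Mxz)))).const_mul (1 / cα)
          simpa using this
        have hev : ∀ᶠ j in atTop, g v (u (ψ j)) ≤ ε := by
          filter_upwards [hbnd, htend.eventually (eventually_le_nhds hε)] with j hj1 hj2
          exact hj1.trans hj2
        obtain ⟨N, hN⟩ := eventually_atTop.mp hev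
        -- shifted sequence lies in the closed convex set {w ∈ Q | g v w ≤ ε}
        set T : Set H₂ := {w : H₂ | w ∈ Q ∧ g v w ≤ ε} with hT_def
        have hTcv : Convex ℝ T := by
          have hcle := (hgA4 v hv).1.convex_le ε
          convert hcle using 1
        have hTcl : IsClosed T := by
          rw [← isSeqClosed_iff_isClosed]
          intro s w hs hsw
          have hwQ : w ∈ Q := hQcl.isSeqClosed (fun n => (hs n).1) hsw
          refine ⟨hwQ, ?_⟩
          by_contra hcon
          push_neg at hcon
          have hlsc := (hgA4 v hv).2 w hwQ ε hcon
          have hsw' : Tendsto s atTop (nhdsWithin w Q) := by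
            rw [tendsto_nhdsWithin_iff]
            exact ⟨hsw, Eventually.of_forall fun n => (hs n).1⟩
          have := (hsw'.eventually hlsc).exists
          obtain ⟨n, hn⟩ := this
          exact absurd (hs n).2 (not_le.mpr hn)
        have hmem : ∀ j, u (ψ (j + N)) ∈ T := fun j => ⟨huQ _, hN _ (Nat.le_add_left N j)⟩
        have hconv : ∀ w' : H₂, Tendsto (fun j => (inner ℝ (u (ψ (j + N))) w' : ℝ)) atTop
            (nhds (inner ℝ (A q) w')) := fun w' => (huq w').comp (tendsto_add_atTop_nat N)
        exact (weak_mem_closed_convex hTcl hTcv hmem hconv).2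
      by_contra hcon
      push_neg at hcon
      linarith [hgoal (g v (A q) / 2) (by linarith)]
    -- Minty argument: g (A q) v ≥ 0 for all v ∈ Q
    have hgAq : ∀ v ∈ Q, g (A q) v ≥ 0 := by
      intro v hv
      have hIoc : ∀ t : ℝ, t ∈ Set.Ioc (0:ℝ) 1 → 0 ≤ g (t • v + (1 - t) • (A q)) v := by
        rintro t ⟨ht0, ht1⟩
        have hvt : t • v + (1 - t) • (A q) ∈ Q := hQcv hv hAqQ ht0.le (by linarith) (by ring)
        have h0 : g (t • v + (1 - t) • (A q)) (t • v + (1 - t) • (A q)) = 0 := hgA1 _ hvt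
        have hcv := (hgA4 _ hvt).1.2 hv hAqQ ht0.le (by linarith : (0:ℝ) ≤ 1 - t) (by ring)
        simp only [smul_eq_mul] at hcv
        have hneg : g (t • v + (1 - t) • (A q)) (A q) ≤ 0 := hgv0 _ hvt
        have h6 : 0 ≤ t * g (t • v + (1 - t) • (A q)) v := by
          have h7 : (1 - t) * g (t • v + (1 - t) • (A q)) (A q) ≤ 0 :=
            mul_nonpos_of_nonneg_of_nonpos (by linarith) hneg
          rw [h0] at hcv
          linarith
        exact nonneg_of_mul_nonneg_right h6 ht0
      have hlim := hgA3 (A q) hAqQ v hv v hv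
      have hev : ∀ᶠ t in nhdsWithin (0:ℝ) (Set.Ioi 0),
          0 ≤ g (t • v + (1 - t) • (A q)) v := by
        have hIoo : Set.Ioo (0:ℝ) 1 ∈ nhdsWithin (0:ℝ) (Set.Ioi 0) :=
          Ioo_mem_nhdsGT_of_mem ⟨le_refl 0, one_pos⟩
        filter_upwards [hIoo] with t ht
        exact hIoc t ⟨ht.1, ht.2.le⟩
      rcases em (Filter.IsBoundedUnder (· ≤ ·) (nhdsWithin (0:ℝ) (Set.Ioi 0))
          (fun t => g (t • v + (1 - t) • (A q)) v)) with hb | hb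
      · by_contra hcon
        push_neg at hcon
        have hltev := eventually_lt_of_limsup_lt (lt_of_le_of_lt hlim hcon) hb
        obtain ⟨t, ht1, ht2⟩ := (hev.and hltev).exists
        linarith
      · have hempty : {r : ℝ | ∀ᶠ t in nhdsWithin (0:ℝ) (Set.Ioi 0),
            g (t • v + (1 - t) • (A q)) v ≤ r} = ∅ := by
          ext r
          simp only [Set.mem_setOf_eq, Set.mem_empty_iff_false, iff_false]
          intro hr
          exact hb ⟨r, by simpa [Filter.eventually_map] using hr⟩
        have hls : limsup (fun t : ℝ => g (t • v + (1 - t) • (A q)) v)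
            (nhdsWithin (0:ℝ) (Set.Ioi 0)) = 0 := by
          rw [Filter.limsup_eq, hempty, Real.sInf_empty]
        rw [hls] at hlim
        exact hlim
    rw [hΩ]
    exact ⟨hqC, hqEP, hAqQ, hgAq⟩
  -- extract a weak cluster point
  obtain ⟨p, φ, hφ, hpw⟩ := exists_weak_subseq x M hM
  have hpΩ : p ∈ Ω := hclusterΩ φ hφ.tendsto_atTop p hpw
  -- uniqueness of weak subsequential limits
  have hsub_eq : ∀ ψ : ℕ → ℕ, Tendsto ψ atTop atTop → ∀ q : H₁,
      (∀ w : H₁, Tendsto (fun j => (inner ℝ (x (ψ j)) w : ℝ)) atTop (nhds (inner ℝ q w))) →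
      q = p := by
    intro ψ hψ q hq
    have hqΩ : q ∈ Ω := hclusterΩ ψ hψ q hq
    obtain ⟨Lp, hLp⟩ := hdistlim p hpΩ
    obtain ⟨Lq, hLq⟩ := hdistlim q hqΩ
    have hid : ∀ k, (inner ℝ (x k) (p - q) : ℝ)
        = (‖x k - q‖ ^ 2 - ‖x k - p‖ ^ 2 - ‖q‖ ^ 2 + ‖p‖ ^ 2) / 2 := by
      intro k
      have e1 : ‖x k - q‖ ^ 2 = ‖x k‖ ^ 2 - 2 * (inner ℝ (x k) q : ℝ) + ‖q‖ ^ 2 :=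
        norm_sub_sq_real _ _
      have e2 : ‖x k - p‖ ^ 2 = ‖x k‖ ^ 2 - 2 * (inner ℝ (x k) p : ℝ) + ‖p‖ ^ 2 :=
        norm_sub_sq_real _ _
      rw [inner_sub_right]
      linarith [e1, e2]
    have hs : Tendsto (fun k => (inner ℝ (x k) (p - q) : ℝ)) atTop
        (nhds ((Lq - Lp - ‖q‖ ^ 2 + ‖p‖ ^ 2) / 2)) := by
      have ht := (((hLq.sub hLp).sub_const (‖q‖ ^ 2)).add_const (‖p‖ ^ 2)).div_const 2
      exact ht.congr fun k => (hid k).symm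
    have h1 : (inner ℝ p (p - q) : ℝ) = (Lq - Lp - ‖q‖ ^ 2 + ‖p‖ ^ 2) / 2 :=
      tendsto_nhds_unique (hpw (p - q)) (hs.comp hφ.tendsto_atTop)
    have h2 : (inner ℝ q (p - q) : ℝ) = (Lq - Lp - ‖q‖ ^ 2 + ‖p‖ ^ 2) / 2 :=
      tendsto_nhds_unique (hq (p - q)) (hs.comp hψ)
    have h3 : (inner ℝ (p - q) (p - q) : ℝ) = 0 := by
      rw [inner_sub_left]; linarith
    have h4 : p - q = 0 := inner_self_eq_zero.mp h3
    have : p = q := by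
      have := sub_eq_zero.mp h4; exact this
    exact this.symm
  -- full weak convergence of x
  have hxweak : ∀ w : H₁, Tendsto (fun k => (inner ℝ (x k) w : ℝ)) atTop
      (nhds (inner ℝ p w)) := by
    intro w
    refine tendsto_of_subseq_tendsto fun ns hns => ?_
    obtain ⟨q, φ', hφ', hq⟩ := exists_weak_subseq (fun j => x (ns j)) M (fun j => hM _)
    have heq : q = p := hsub_eq (fun j => ns (φ' j)) (hns.comp hφ'.tendsto_atTop) q hq
    exact ⟨φ', by rw [← heq]; exact hq w⟩
  -- weak convergence of z
  have hzweak : ∀ w : H₁, Tendsto (fun k => (inner ℝ (z k) w : ℝ)) atTop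
      (nhds (inner ℝ p w)) := by
    intro w
    have h0 : Tendsto (fun k => (inner ℝ (z k - x k) w : ℝ)) atTop (nhds 0) := by
      refine squeeze_zero_norm (a := fun k => ‖x k - z k‖ * ‖w‖) (fun k => ?_) ?_
      · refine (abs_real_inner_le_norm _ _).trans (le_of_eq ?_)
        rw [norm_sub_rev]
      · have := hxz0.mul_const ‖w‖
        simpa using this
    have := (hxweak w).add h0
    rw [add_zero] at this
    refine this.congr fun k => ?_
    rw [inner_sub_left]; ring
  -- weak convergence of u
  have huweak : ∀ v : H₂, Tendsto (fun k => (inner ℝ (u k) v : ℝ)) atTop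
      (nhds (inner ℝ (A p) v)) := by
    intro v
    have h0 : Tendsto (fun k => (inner ℝ (e k) v : ℝ)) atTop (nhds 0) := by
      refine squeeze_zero_norm (a := fun k => ‖e k‖ * ‖v‖) (fun k => ?_) ?_
      · exact abs_real_inner_le_norm _ _
      · have := he0.mul_const ‖v‖
        simpa using this
    have h1 : Tendsto (fun k => (inner ℝ (A (z k)) v : ℝ)) atTop (nhds (inner ℝ (A p) v)) := by
      have h2 := hzweak ((ContinuousLinearMap.adjoint A) v)
      have h3 : ∀ k, (inner ℝ (z k) ((ContinuousLinearMap.adjoint A) v) : ℝ)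
          = (inner ℝ (A (z k)) v : ℝ) := fun k =>
        ContinuousLinearMap.adjoint_inner_right A (z k) v
      have h4 : (inner ℝ p ((ContinuousLinearMap.adjoint A) v) : ℝ) = inner ℝ (A p) v :=
        ContinuousLinearMap.adjoint_inner_right A p v
      rw [h4] at h2
      exact h2.congr h3
    have := h0.add h1
    rw [zero_add] at this
    refine this.congr fun k => ?_
    have heu : u k = e k + A (z k) := by simp [he_def]
    rw [heu, inner_add_left]
  exact ⟨p, hpΩ, hxweak, hzweak, huweak, (hΩmem p hpΩ).2.2.1, (hΩmem p hpΩ).2.2.2⟩
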